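/- The entangler matrix E satisfies E = botCNOT · topCNOT · (H ⊕ H) · botCNOT · (1 ⊕ 1 ⊕ i ⊕ i as diagonal) · botCNOT, where H ⊕ H is the block-diagonal matrix with the Hadamard matrix H = (1/√2)[[1,1],[1,−1]] in both 2×2 blocks (with rows appropriately as stated: (1/√2)[[1,1,0,0],[1,−1,0,0],[0,0,1,1],[0,0,1,−1]]), topCNOT swaps basis vectors 3 and 4, and botCNOT swaps basis vectors 2 and 4. -/
import Mathlib


open Matrix Complex

noncomputable def entangler : Matrix (Fin 4) (Fin 4) ℂ :=
  ((Real.sqrt 2 : ℂ))⁻¹ • !![1, I, 0, 0; 0, 0, I, 1; 0, 0, I, -1; 1, -I, 0, 0]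

def botCNOT : Matrix (Fin 4) (Fin 4) ℂ :=
  !![1, 0, 0, 0; 0, 0, 0, 1; 0, 0, 1, 0; 0, 1, 0, 0]

def topCNOT : Matrix (Fin 4) (Fin 4) ℂ :=
  !![1, 0, 0, 0; 0, 1, 0, 0; 0, 0, 0, 1; 0, 0, 1, 0]

noncomputable def HH : Matrix (Fin 4) (Fin 4) ℂ :=
  ((Real.sqrt 2 : ℂ))⁻¹ • !![1, 1, 0, 0; 1, -1, 0, 0; 0, 0, 1, 1; 0, 0, 1, -1]

set_option maxHeartbeats 1000000 in
theorem entangler_circuit :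
    entangler = botCNOT * topCNOT * HH * botCNOT * Matrix.diagonal ![1, 1, I, I] * botCNOT := by
  have hd : Matrix.diagonal ![(1:ℂ), 1, I, I] = !![1,0,0,0; 0,1,0,0; 0,0,I,0; 0,0,0,I] := by
    ext i j
    fin_cases i <;> fin_cases j <;> simp [Matrix.diagonal_apply, Matrix.vecHead, Matrix.vecTail]
  rw [hd]
  unfold entangler botCNOT topCNOT HH
  ext i j
  fin_cases i <;> fin_cases j <;>
    simp [Matrix.mul_apply, Fin.sum_univ_four, Matrix.smul_apply, Matrix.vecHead, Matrix.vecTail] <;> ring
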